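/- arXiv:2408.12189 — 2 statements merged into one kernel-verified Lean document; each statement's English description precedes it below -/
import Mathlib

section
/- The Petersen graph admits no packing (1,2^5)-coloring, i.e., its vertex set cannot be partitioned into one independent set and five 2-packings. -/
/-- The Petersen graph, realized as the Kneser graph `K(5,2)`: vertices are the
2-element subsets of a 5-element set, adjacent iff the subsets are disjoint. -/
def petersen : SimpleGraph {s : Finset (Fin 5) // s.card = 2} where
  Adj a b := Disjoint a.1 b.1
  symm := ⟨fun _ _ h => h.symm⟩
  loopless := ⟨fun a h => by
    simp only [disjoint_self] at h
    have := a.2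
    rw [h] at this
    simp at this⟩

/-- A packing `(1,2^k)`-coloring of `G`, given as a function to `Fin (k+1)`:
the class of color `0` is an independent set, and each of the other `k` classes
is a 2-packing (any two distinct vertices in it are at distance at least 3,
where unreachable pairs count as infinitely far apart). -/
def IsPackingOneTwoColoring {V : Type*} (G : SimpleGraph V) (k : ℕ)
    (c : V → Fin (k + 1)) : Prop :=
  (∀ u v : V, G.Adj u v → ¬(c u = 0 ∧ c v = 0)) ∧
  (∀ u v : V, u ≠ v → c u = c v → c u ≠ 0 → (¬G.Reachable u v ∨ 3 ≤ G.dist u v))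

abbrev PetersenV := {s : Finset (Fin 5) // s.card = 2}

instance : DecidableRel petersen.Adj := fun a b =>
  inferInstanceAs (Decidable (Disjoint a.1 b.1))

def petPr : Fin 10 → Finset (Fin 5) :=
  ![{0,1},{0,2},{0,3},{0,4},{1,2},{1,3},{1,4},{2,3},{2,4},{3,4}]

lemma petPr_card : ∀ i, (petPr i).card = 2 := by decide

def petE (i : Fin 10) : PetersenV := ⟨petPr i, petPr_card i⟩

def petL : List (Fin 10 × Fin 10) :=
  [(0,7),(0,8),(0,9),(1,5),(1,6),(1,9),(2,4),(2,6),(2,8),(3,4),(3,5),(3,7),(4,9),(5,8),(6,7)]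

def petA (i j : Fin 10) : Bool := decide ((i,j) ∈ petL ∨ (j,i) ∈ petL)

lemma petA_adj : ∀ i j : Fin 10, petersen.Adj (petE i) (petE j) ↔ petA i j = true := by decide

lemma petE_surj : ∀ v : PetersenV, ∃ i, petE i = v := by decide

lemma petE_inj : ∀ i j : Fin 10, petE i = petE j → i = j := by decide

lemma petKey : ∀ i j : Fin 10, i ≠ j →
    petA i j = true ∨ ∃ k, petA i k = true ∧ petA k j = true := by decide

lemma petIndep : ∀ b0 b1 b2 b3 b4 b5 b6 b7 b8 b9 : Bool,
    5 ≤ ∑ i : Fin 10, (if ![b0,b1,b2,b3,b4,b5,b6,b7,b8,b9] i then 1 else 0 : ℕ) →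
    ∃ i j : Fin 10, ![b0,b1,b2,b3,b4,b5,b6,b7,b8,b9] i = true ∧
      ![b0,b1,b2,b3,b4,b5,b6,b7,b8,b9] j = true ∧ petA i j = true := by decide


/-- The Petersen graph admits no packing `(1,2^5)`-coloring: its vertex set cannot
be partitioned into one independent set and five 2-packings. -/
theorem petersen_no_packing_one_two_five_coloring :
    ¬∃ c : {s : Finset (Fin 5) // s.card = 2} → Fin 6,
      IsPackingOneTwoColoring petersen 5 c := by
  rintro ⟨c, h0, h2⟩
  set d : Fin 10 → Fin 6 := fun i => c (petE i) with hd
  -- the Petersen graph has diameter 2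
  have hsmall : ∀ u v : PetersenV, u ≠ v →
      petersen.Reachable u v ∧ petersen.dist u v ≤ 2 := by
    intro u v huv
    obtain ⟨i, rfl⟩ := petE_surj u
    obtain ⟨j, rfl⟩ := petE_surj v
    have hij : i ≠ j := fun h => huv (by rw [h])
    rcases petKey i j hij with h | ⟨k, hk1, hk2⟩
    · have ha := (petA_adj i j).2 h
      refine ⟨ha.reachable, le_trans (petersen.dist_le ha.toWalk) ?_⟩
      rw [SimpleGraph.Adj.toWalk, SimpleGraph.Walk.length_cons, SimpleGraph.Walk.length_nil]
      omega
    · have ha1 := (petA_adj i k).2 hk1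
      have ha2 := (petA_adj k j).2 hk2
      refine ⟨⟨SimpleGraph.Walk.cons ha1 (SimpleGraph.Walk.cons ha2 SimpleGraph.Walk.nil)⟩,
        le_trans (petersen.dist_le
          (SimpleGraph.Walk.cons ha1 (SimpleGraph.Walk.cons ha2 SimpleGraph.Walk.nil))) ?_⟩
      rw [SimpleGraph.Walk.length_cons, SimpleGraph.Walk.length_cons, SimpleGraph.Walk.length_nil]
  -- each nonzero color class has at most one vertex
  have hfib : ∀ q : Fin 6, q ≠ 0 →
      (Finset.univ.filter (fun i : Fin 10 => d i = q)).card ≤ 1 := by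
    intro q hq
    by_contra hc
    push_neg at hc
    obtain ⟨i, hi, j, hj, hij⟩ := Finset.one_lt_card.mp hc
    rw [Finset.mem_filter] at hi hj
    have hne : petE i ≠ petE j := fun h => hij (petE_inj _ _ h)
    have hcc : c (petE i) = c (petE j) := hi.2.trans hj.2.symm
    have hnz : c (petE i) ≠ 0 := by rw [show c (petE i) = d i from rfl, hi.2]; exact hq
    obtain ⟨hr, hdist⟩ := hsmall (petE i) (petE j) hne
    rcases h2 (petE i) (petE j) hne hcc hnz with h | h
    · exact h hr
    · omega
  -- hence the color-0 class has at least 5 vertices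
  have hsum : ∑ q : Fin 6, (Finset.univ.filter (fun i : Fin 10 => d i = q)).card = 10 := by
    rw [← Finset.card_eq_sum_card_fiberwise (fun x _ => Finset.mem_univ (d x))]
    simp
  have h5 : 5 ≤ (Finset.univ.filter (fun i : Fin 10 => d i = 0)).card := by
    have e1 := hfib 1 (by decide)
    have e2 := hfib 2 (by decide)
    have e3 := hfib 3 (by decide)
    have e4 := hfib 4 (by decide)
    have e5 := hfib 5 (by decide)
    rw [Fin.sum_univ_six] at hsum
    omega
  -- rewrite the cardinality as a sum of indicators
  have hcount : (Finset.univ.filter (fun i : Fin 10 => d i = 0)).card =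
      ∑ i : Fin 10, if d i = 0 then 1 else 0 := by
    rw [Finset.card_filter]
  rw [hcount] at h5
  have hmat : ∀ k : Fin 10, ![decide (d 0 = 0), decide (d 1 = 0), decide (d 2 = 0),
      decide (d 3 = 0), decide (d 4 = 0), decide (d 5 = 0), decide (d 6 = 0),
      decide (d 7 = 0), decide (d 8 = 0), decide (d 9 = 0)] k = decide (d k = 0) := by
    intro k
    fin_cases k <;> rfl
  have h5' : 5 ≤ ∑ i : Fin 10, (if ![decide (d 0 = 0), decide (d 1 = 0), decide (d 2 = 0),
      decide (d 3 = 0), decide (d 4 = 0), decide (d 5 = 0), decide (d 6 = 0),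
      decide (d 7 = 0), decide (d 8 = 0), decide (d 9 = 0)] i then 1 else 0 : ℕ) := by
    have heq : (∑ i : Fin 10, (if ![decide (d 0 = 0), decide (d 1 = 0), decide (d 2 = 0),
        decide (d 3 = 0), decide (d 4 = 0), decide (d 5 = 0), decide (d 6 = 0),
        decide (d 7 = 0), decide (d 8 = 0), decide (d 9 = 0)] i then 1 else 0 : ℕ)) =
        ∑ i : Fin 10, if d i = 0 then 1 else 0 := by
      refine Finset.sum_congr rfl fun k _ => ?_
      rw [hmat k]
      by_cases h : d k = 0 <;> simp [h]
    rw [heq]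
    exact h5
  obtain ⟨i, j, hfi, hfj, hA⟩ := petIndep (decide (d 0 = 0)) (decide (d 1 = 0))
    (decide (d 2 = 0)) (decide (d 3 = 0)) (decide (d 4 = 0)) (decide (d 5 = 0))
    (decide (d 6 = 0)) (decide (d 7 = 0)) (decide (d 8 = 0)) (decide (d 9 = 0)) h5'
  rw [hmat] at hfi
  rw [hmat] at hfj
  have hdi : d i = 0 := of_decide_eq_true hfi
  have hdj : d j = 0 := of_decide_eq_true hfj
  exact h0 (petE i) (petE j) ((petA_adj i j).2 hA) ⟨hdi, hdj⟩
end

section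
/- Let G be a cubic graph with a good coloring f using colors {1,A,B,C,D,E} (1 a 1-color, the rest 2-colors), and let u be a vertex with f(u)=1 whose two specified neighbors u1,u2 are adjacent (u,u1,u2 form a triangle). Then |N^2(u)| ≤ 4, and consequently some color from {A,B,C,D,E} does not appear on N^2(u), so u can be recolored with a 2-color. -/
/-- A good coloring (packing `(1,2^5)`-coloring) of `G` with colors `Fin 6`:
color `0` (the 1-color) forms an independent set, and each nonzero color class
(the 2-colors `A,B,C,D,E`) is a 2-packing: any two distinct vertices in it are at
distance at least 3 (unreachable pairs count as infinitely far apart). -/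
def IsGoodColoring {V : Type*} (G : SimpleGraph V) (c : V → Fin 6) : Prop :=
  (∀ u v : V, G.Adj u v → ¬(c u = 0 ∧ c v = 0)) ∧
  (∀ u v : V, u ≠ v → c u = c v → c u ≠ 0 → (¬G.Reachable u v ∨ 3 ≤ G.dist u v))

private lemma walk_len_two {V : Type*} {G : SimpleGraph V} {u w : V} (p : G.Walk u w)
    (h : p.length = 2) : ∃ z, G.Adj u z ∧ G.Adj z w := by
  match p with
  | .cons h1 (.cons h2 r) =>
    have hr : r.length = 0 := by simp only [SimpleGraph.Walk.length_cons] at h; omega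
    have := r.eq_of_length_eq_zero hr
    subst this
    exact ⟨_, h1, h2⟩

/-- Let `G` be a subcubic (maximum degree 3) graph with a good coloring `f`, and
let `u` be a vertex with `f u = 0` (color `1`) whose neighbours are exactly the
two adjacent vertices `u₁, u₂` (so `u, u₁, u₂` form a triangle). Then
`N²(u)`, the set of vertices at distance 1 or 2 from `u`, has at most 4 elements,
and consequently some 2-color does not appear on `N²(u)`, so `u` can be recolored
with that 2-color, keeping a good coloring. -/
theorem recolor_one_vertex_in_triangle {V : Type*} [Fintype V] [DecidableEq V] (G : SimpleGraph V)
    (hsub : ∀ v : V, (G.neighborSet v).ncard ≤ 3)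
    (f : V → Fin 6) (hf : IsGoodColoring G f)
    (u u₁ u₂ : V) (hN : ∀ w : V, G.Adj u w ↔ (w = u₁ ∨ w = u₂))
    (h12 : G.Adj u₁ u₂) (hu : f u = 0) :
    ({w : V | G.dist u w = 1 ∨ G.dist u w = 2}).ncard ≤ 4 ∧
    ∃ x : Fin 6, x ≠ 0 ∧ (∀ w : V, (G.dist u w = 1 ∨ G.dist u w = 2) → f w ≠ x) ∧
      IsGoodColoring G (Function.update f u x) := by
  set S : Set V := {w : V | G.dist u w = 1 ∨ G.dist u w = 2} with hS
  have hu1 : G.Adj u u₁ := (hN u₁).mpr (Or.inl rfl)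
  have hu2 : G.Adj u u₂ := (hN u₂).mpr (Or.inr rfl)
  -- S is contained in (N(u₁) \ {u}) ∪ (N(u₂) \ {u})
  have hsubS : S ⊆ (G.neighborSet u₁ \ {u}) ∪ (G.neighborSet u₂ \ {u}) := by
    intro w hw
    have hwu : w ≠ u := by
      rintro rfl
      simp only [hS, Set.mem_setOf_eq, SimpleGraph.dist_self] at hw
      omega
    rcases hw with h1 | h2
    · have hadj : G.Adj u w := SimpleGraph.dist_eq_one_iff_adj.mp h1
      rcases (hN w).mp hadj with rfl | rfl
      · exact Or.inr ⟨h12.symm, hwu⟩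
      · exact Or.inl ⟨h12, hwu⟩
    · have hreach : G.Reachable u w := by
        by_contra hr
        have := SimpleGraph.dist_eq_zero_of_not_reachable hr
        omega
      obtain ⟨p, hp⟩ := hreach.exists_walk_length_eq_dist
      rw [h2] at hp
      obtain ⟨z, hz1, hz2⟩ := walk_len_two p hp
      rcases (hN z).mp hz1 with rfl | rfl
      · exact Or.inl ⟨hz2, hwu⟩
      · exact Or.inr ⟨hz2, hwu⟩
  have hcard1 : (G.neighborSet u₁ \ {u}).ncard ≤ 2 := by
    have := Set.ncard_diff_singleton_of_mem (show u ∈ G.neighborSet u₁ from hu1.symm)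
    have := hsub u₁
    omega
  have hcard2 : (G.neighborSet u₂ \ {u}).ncard ≤ 2 := by
    have := Set.ncard_diff_singleton_of_mem (show u ∈ G.neighborSet u₂ from hu2.symm)
    have := hsub u₂
    omega
  have hScard : S.ncard ≤ 4 := by
    have h1 := Set.ncard_le_ncard hsubS (Set.toFinite _)
    have h2 := Set.ncard_union_le (G.neighborSet u₁ \ {u}) (G.neighborSet u₂ \ {u})
    omega
  refine ⟨hScard, ?_⟩
  -- find a nonzero color not used on S
  have hx : ∃ x : Fin 6, x ≠ 0 ∧ ∀ w ∈ S, f w ≠ x := by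
    by_contra hc
    push_neg at hc
    have hsub' : {x : Fin 6 | x ≠ 0} ⊆ f '' S := by
      intro x hx
      obtain ⟨w, hw, hfw⟩ := hc x hx
      exact ⟨w, hw, hfw⟩
    have h5 : ({x : Fin 6 | x ≠ 0} : Set (Fin 6)).ncard = 5 := by
      rw [Set.ncard_eq_toFinset_card']
      decide
    have := Set.ncard_le_ncard hsub' (Set.toFinite _)
    have := Set.ncard_image_le (f := f) (s := S) (Set.toFinite _)
    omega
  obtain ⟨x, hx0, hxS⟩ := hx
  refine ⟨x, hx0, hxS, ?_, ?_⟩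
  · intro a b hab
    rintro ⟨ha, hb⟩
    rcases eq_or_ne a u with rfl | hau
    · rw [Function.update_self] at ha; exact hx0 ha
    rcases eq_or_ne b u with rfl | hbu
    · rw [Function.update_self] at hb; exact hx0 hb
    rw [Function.update_of_ne hau] at ha
    rw [Function.update_of_ne hbu] at hb
    exact hf.1 a b hab ⟨ha, hb⟩
  · intro a b hne hcc hc0
    rcases eq_or_ne a u with hau | hau
    · have hbu' : b ≠ u := fun h => hne (hau.trans h.symm)
      rw [hau, Function.update_self] at hcc
      rw [Function.update_of_ne hbu'] at hcc
      by_contra hcon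
      push_neg at hcon
      obtain ⟨hreach, hd3⟩ := hcon
      rw [hau] at hreach hd3
      have hpos : 0 < G.dist u b := hreach.pos_dist_of_ne (fun h => hne (hau.trans h))
      have : G.dist u b = 1 ∨ G.dist u b = 2 := by omega
      exact hxS b this hcc.symm
    rcases eq_or_ne b u with hbu | hbu
    · rw [hbu, Function.update_self] at hcc
      rw [Function.update_of_ne hau] at hcc
      by_contra hcon
      push_neg at hcon
      obtain ⟨hreach, hd3⟩ := hcon
      rw [hbu] at hreach hd3
      have hreach' : G.Reachable u a := hreach.symm
      have hpos : 0 < G.dist u a := hreach'.pos_dist_of_ne (fun h => hau h.symm)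
      have hdc : G.dist a u = G.dist u a := SimpleGraph.dist_comm ..
      have : G.dist u a = 1 ∨ G.dist u a = 2 := by omega
      exact hxS a this hcc
    · rw [Function.update_of_ne hau] at hcc hc0
      rw [Function.update_of_ne hbu] at hcc
      exact hf.2 a b hne hcc hc0
end
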